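/- arXiv:2109.14605 — 5 statements merged into one kernel-verified Lean document; each statement's English description precedes it below -/
import Mathlib

section
/- Fix 0 < q < 1, φ, ψ ∈ ℝ, a sign σ ∈ {1, −1}, and p ∈ ℕ. On ℂ^{p+1} with standard basis e_0, …, e_p define ℂ-linear maps K, K', E, F by: K e_j = q^{j−p/2} exp(−i(4(j−p/2)φ + ψ)) e_j; K' e_j = q^{j−p/2} exp(i(4(j−p/2)φ + ψ)) e_j; F e_j = σ √([p−j]_q [j+1]_q) e_{j+1} for j < p and F e_p = 0; E e_j = σ √([j]_q [p−j+1]_q) e_{j−1} for j > 0 and E e_0 = 0. Then: K and K' are invertible; K K' = K' K; E K = q e^{−4iφ} K E; K F = q e^{−4iφ} F K; E F − F E = (K K' − K⁻¹ K'⁻¹)/(q⁻¹ − q); and with respect to the standard Hermitian inner product on ℂ^{p+1}, K' is the adjoint of K and F is the adjoint of E. (Hence these operators define the finite-dimensional *-representation T_{l,ψ}, l = p/2, of the braided algebra U_{q,φ}(û(2)).) -/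
noncomputable section

/-- The `q`-integer `[n]_q = (qⁿ − q⁻ⁿ)/(q − q⁻¹)`. -/
def qInt (q : ℝ) (n : ℤ) : ℝ := (q ^ n - q ^ (-n)) / (q - q⁻¹)

/-- The eigenvalue of `K` on the basis vector `e_j`:
`q^{j−p/2} exp(−i(4(j−p/2)φ + ψ))`. -/
def kCoef (q φ ψ : ℝ) (p j : ℕ) : ℂ :=
  ((q ^ ((j : ℝ) - (p : ℝ) / 2) : ℝ) : ℂ) *
    Complex.exp (-Complex.I * (4 * ((j : ℝ) - (p : ℝ) / 2) * φ + ψ))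

/-- The eigenvalue of `K' = K†` on the basis vector `e_j`:
`q^{j−p/2} exp(i(4(j−p/2)φ + ψ))`. -/
def kStarCoef (q φ ψ : ℝ) (p j : ℕ) : ℂ :=
  ((q ^ ((j : ℝ) - (p : ℝ) / 2) : ℝ) : ℂ) *
    Complex.exp (Complex.I * (4 * ((j : ℝ) - (p : ℝ) / 2) * φ + ψ))

/-- The coefficient `√([p−j]_q [j+1]_q)` of the raising operator `F`. -/
def fCoef (q : ℝ) (p j : ℕ) : ℝ :=
  Real.sqrt (qInt q ((p : ℤ) - (j : ℤ)) * qInt q ((j : ℤ) + 1))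

/-- The coefficient `√([j]_q [p−j+1]_q)` of the lowering operator `E`. -/
def eCoef (q : ℝ) (p j : ℕ) : ℝ :=
  Real.sqrt (qInt q (j : ℤ) * qInt q ((p : ℤ) - (j : ℤ) + 1))

section AuxLemmas

variable {q φ ψ : ℝ} {p : ℕ}

/-- extensionality on the standard basis -/
lemma end_ext {n : ℕ} {A B : Module.End ℂ (EuclideanSpace ℂ (Fin n))}
    (h : ∀ j, A (EuclideanSpace.single j 1) = B (EuclideanSpace.single j 1)) : A = B := by
  apply Module.Basis.ext (PiLp.basisFun 2 ℂ (Fin n))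
  intro i
  simpa [PiLp.basisFun_apply] using h i

/-- the diagonal endomorphism with entries `c`. -/
def diagEnd {n : ℕ} (c : Fin n → ℂ) : Module.End ℂ (EuclideanSpace ℂ (Fin n)) :=
  (PiLp.basisFun 2 ℂ (Fin n)).constr ℂ (fun j => c j • EuclideanSpace.single j 1)

lemma diagEnd_single {n : ℕ} (c : Fin n → ℂ) (j : Fin n) :
    diagEnd c (EuclideanSpace.single j 1) = c j • EuclideanSpace.single j 1 := by
  have := (PiLp.basisFun 2 ℂ (Fin n)).constr_basis ℂ
    (fun j => c j • EuclideanSpace.single j (1 : ℂ)) j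
  simpa [diagEnd, PiLp.basisFun_apply] using this

lemma kCoef_succ (hq0 : 0 < q) (j : ℕ) :
    kCoef q φ ψ p (j + 1) =
      ((q : ℂ) * Complex.exp (-4 * Complex.I * (φ : ℂ))) * kCoef q φ ψ p j := by
  unfold kCoef
  have h1 : ((j + 1 : ℕ) : ℝ) - (p : ℝ) / 2 = 1 + ((j : ℝ) - (p : ℝ) / 2) := by push_cast; ring
  rw [h1, Real.rpow_add hq0, Real.rpow_one]
  have h2 : (-Complex.I * (4 * ((((j + 1 : ℕ) : ℝ) : ℂ) - (((p : ℝ)) : ℂ) / 2) * (φ : ℂ) + (ψ : ℂ)))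
      = (-4 * Complex.I * (φ : ℂ)) +
        (-Complex.I * (4 * ((((j : ℕ) : ℝ) : ℂ) - (((p : ℝ)) : ℂ) / 2) * (φ : ℂ) + (ψ : ℂ))) := by
    push_cast; ring
  rw [h2, Complex.exp_add]
  push_cast
  ring

lemma conj_kCoef (j : ℕ) :
    (starRingEnd ℂ) (kCoef q φ ψ p j) = kStarCoef q φ ψ p j := by
  unfold kCoef kStarCoef
  rw [map_mul, Complex.conj_ofReal, ← Complex.exp_conj]
  congr 1
  simp only [map_mul, map_add, map_neg, Complex.conj_I, Complex.conj_ofReal, map_ofNat, map_sub,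
    map_div₀]
  push_cast
  ring

lemma conj_kStarCoef (j : ℕ) :
    (starRingEnd ℂ) (kStarCoef q φ ψ p j) = kCoef q φ ψ p j := by
  rw [← conj_kCoef (q := q) (φ := φ) (ψ := ψ) (p := p) j, Complex.conj_conj]

lemma kCoef_ne_zero (hq0 : 0 < q) (j : ℕ) : kCoef q φ ψ p j ≠ 0 := by
  unfold kCoef
  exact mul_ne_zero (by exact_mod_cast (Real.rpow_pos_of_pos hq0 _).ne') (Complex.exp_ne_zero _)

lemma kStarCoef_ne_zero (hq0 : 0 < q) (j : ℕ) : kStarCoef q φ ψ p j ≠ 0 := by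
  unfold kStarCoef
  exact mul_ne_zero (by exact_mod_cast (Real.rpow_pos_of_pos hq0 _).ne') (Complex.exp_ne_zero _)

lemma kmul (hq0 : 0 < q) (j : ℕ) :
    kCoef q φ ψ p j * kStarCoef q φ ψ p j = ((q ^ (2 * (j : ℤ) - (p : ℤ)) : ℝ) : ℂ) := by
  unfold kCoef kStarCoef
  rw [mul_mul_mul_comm, ← Complex.exp_add, ← Complex.ofReal_mul, ← Real.rpow_add hq0]
  rw [show (-Complex.I * (4 * ((((j : ℕ) : ℝ) : ℂ) - (((p : ℝ)) : ℂ) / 2) * (φ : ℂ) + (ψ : ℂ))) +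
      (Complex.I * (4 * ((((j : ℕ) : ℝ) : ℂ) - (((p : ℝ)) : ℂ) / 2) * (φ : ℂ) + (ψ : ℂ))) = 0 by
        ring,
    Complex.exp_zero, mul_one]
  rw [show ((j : ℝ) - (p : ℝ) / 2) + ((j : ℝ) - (p : ℝ) / 2) = ((2 * (j : ℤ) - (p : ℤ) : ℤ) : ℝ)
      by push_cast; ring, Real.rpow_intCast]

lemma hqsub (hq0 : 0 < q) (hq1 : q < 1) : q - q⁻¹ < 0 := by
  have : 1 < q⁻¹ := (one_lt_inv₀ hq0).mpr hq1
  linarith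

lemma qInt_nonneg (hq0 : 0 < q) (hq1 : q < 1) {n : ℤ} (hn : 0 ≤ n) : 0 ≤ qInt q n := by
  have h1 : q ^ n ≤ q ^ (-n) := zpow_le_zpow_right_of_le_one₀ hq0 hq1.le (by omega)
  have h2 := hqsub hq0 hq1
  rw [qInt, ← neg_div_neg_eq]
  exact div_nonneg (by linarith) (by linarith)

lemma eCoef_succ (j : ℕ) : eCoef q p (j + 1) = fCoef q p j := by
  unfold eCoef fCoef
  rw [show ((j + 1 : ℕ) : ℤ) = (j : ℤ) + 1 by push_cast; ring,
    show (p : ℤ) - ((j : ℤ) + 1) + 1 = (p : ℤ) - j by ring, mul_comm]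

lemma fCoef_pred {j : ℕ} (hj : 0 < j) : fCoef q p (j - 1) = eCoef q p j := by
  unfold eCoef fCoef
  rw [show ((j - 1 : ℕ) : ℤ) = (j : ℤ) - 1 by omega,
    show (p : ℤ) - ((j : ℤ) - 1) = (p : ℤ) - j + 1 by ring,
    show (j : ℤ) - 1 + 1 = (j : ℤ) by ring, mul_comm]

lemma fCoef_last : fCoef q p p = 0 := by simp [fCoef, qInt]

lemma eCoef_zero : eCoef q p 0 = 0 := by simp [eCoef, qInt]

lemma fCoef_sq (hq0 : 0 < q) (hq1 : q < 1) {j : ℕ} (hj : j ≤ p) :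
    fCoef q p j * fCoef q p j = qInt q ((p : ℤ) - j) * qInt q ((j : ℤ) + 1) :=
  Real.mul_self_sqrt
    (mul_nonneg (qInt_nonneg hq0 hq1 (by omega)) (qInt_nonneg hq0 hq1 (by omega)))

lemma eCoef_sq (hq0 : 0 < q) (hq1 : q < 1) {j : ℕ} (hj : j ≤ p) :
    eCoef q p j * eCoef q p j = qInt q (j : ℤ) * qInt q ((p : ℤ) - j + 1) :=
  Real.mul_self_sqrt
    (mul_nonneg (qInt_nonneg hq0 hq1 (by omega)) (qInt_nonneg hq0 hq1 (by omega)))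

lemma key_identity (hq0 : 0 < q) (hq1 : q < 1) (j : ℕ) :
    qInt q ((p : ℤ) - j) * qInt q ((j : ℤ) + 1) - qInt q (j : ℤ) * qInt q ((p : ℤ) - j + 1)
      = (q⁻¹ - q)⁻¹ * (q ^ (2 * (j : ℤ) - (p : ℤ)) - q ^ ((p : ℤ) - 2 * (j : ℤ))) := by
  have hq : q ≠ 0 := hq0.ne'
  have ha : q ^ (j : ℕ) ≠ 0 := pow_ne_zero _ hq
  have hb : q ^ (p : ℕ) ≠ 0 := pow_ne_zero _ hq
  have hs : q - q⁻¹ ≠ 0 := (hqsub hq0 hq1).ne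
  apply mul_left_cancel₀ (pow_ne_zero 2 hs)
  have hqInt : ∀ m n : ℤ,
      (q - q⁻¹) ^ 2 * (qInt q m * qInt q n) = (q ^ m - q ^ (-m)) * (q ^ n - q ^ (-n)) := by
    intro m n
    rw [qInt, qInt, div_mul_div_comm, pow_two, ← mul_div_assoc,
      mul_div_cancel_left₀ _ (mul_ne_zero hs hs)]
  rw [mul_sub, hqInt, hqInt,
    show ((q - q⁻¹) ^ 2 : ℝ) *
        ((q⁻¹ - q)⁻¹ * (q ^ (2 * (j : ℤ) - (p : ℤ)) - q ^ ((p : ℤ) - 2 * (j : ℤ)))) =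
      -(((q - q⁻¹) * (q - q⁻¹)⁻¹) *
        ((q - q⁻¹) * (q ^ (2 * (j : ℤ) - (p : ℤ)) - q ^ ((p : ℤ) - 2 * (j : ℤ))))) by
          rw [show q⁻¹ - q = -(q - q⁻¹) by ring, inv_neg]; ring,
    mul_inv_cancel₀ hs, one_mul]
  simp only [zpow_sub₀ hq, zpow_add₀ hq, zpow_neg, zpow_one, zpow_natCast, two_mul]
  field_simp
  ring

end AuxLemmas

/-- The operators `K, K', E, F` of the representation `T_{l,ψ}`, `l = p/2`, of the braided
algebra `U_{q,φ}(û(2))` on `ℂ^{p+1}` satisfy its defining relations: `K, K'` are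
invertible and commute, `EK = q e^{−4iφ} KE`, `KF = q e^{−4iφ} FK`,
`EF − FE = (KK' − K⁻¹K'⁻¹)/(q⁻¹ − q)`, and with respect to the standard Hermitian inner
product `K'` is the adjoint of `K` and `F` is the adjoint of `E`. -/
theorem uqu2_representation_relations
    (q φ ψ : ℝ) (hq0 : 0 < q) (hq1 : q < 1) (σ : ℝ) (hσ : σ = 1 ∨ σ = -1) (p : ℕ)
    (K K' E F : Module.End ℂ (EuclideanSpace ℂ (Fin (p + 1))))
    (hK : ∀ j : Fin (p + 1),
      K (EuclideanSpace.single j 1) = kCoef q φ ψ p j • EuclideanSpace.single j 1)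
    (hK' : ∀ j : Fin (p + 1),
      K' (EuclideanSpace.single j 1) = kStarCoef q φ ψ p j • EuclideanSpace.single j 1)
    (hF : ∀ (j : Fin (p + 1)) (h : (j : ℕ) + 1 < p + 1),
      F (EuclideanSpace.single j 1) =
        ((σ * fCoef q p j : ℝ) : ℂ) • EuclideanSpace.single (⟨(j : ℕ) + 1, h⟩ : Fin (p + 1)) 1)
    (hFlast : F (EuclideanSpace.single (Fin.last p) 1) = 0)
    (hE : ∀ (j : Fin (p + 1)) (h : 0 < (j : ℕ)),
      E (EuclideanSpace.single j 1) =
        ((σ * eCoef q p j : ℝ) : ℂ) •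
          EuclideanSpace.single
            (⟨(j : ℕ) - 1, Nat.lt_of_le_of_lt (Nat.sub_le _ _) j.isLt⟩ : Fin (p + 1)) 1)
    (hE0 : E (EuclideanSpace.single (0 : Fin (p + 1)) 1) = 0) :
    (∃ Kinv K'inv : Module.End ℂ (EuclideanSpace ℂ (Fin (p + 1))),
      K * Kinv = 1 ∧ Kinv * K = 1 ∧ K' * K'inv = 1 ∧ K'inv * K' = 1 ∧
      E * F - F * E = ((q : ℂ)⁻¹ - (q : ℂ))⁻¹ • (K * K' - Kinv * K'inv)) ∧
    K * K' = K' * K ∧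
    E * K = ((q : ℂ) * Complex.exp (-4 * Complex.I * (φ : ℂ))) • (K * E) ∧
    K * F = ((q : ℂ) * Complex.exp (-4 * Complex.I * (φ : ℂ))) • (F * K) ∧
    LinearMap.adjoint K = K' ∧
    LinearMap.adjoint E = F := by
  have hq : q ≠ 0 := hq0.ne'
  have hσ2 : σ * σ = 1 := by rcases hσ with h | h <;> rw [h] <;> norm_num
  -- the product E∘F on basis vectors
  have hEF : ∀ j : Fin (p + 1), (E * F) (EuclideanSpace.single j 1) =
      ((fCoef q p j * fCoef q p j : ℝ) : ℂ) • EuclideanSpace.single j 1 := by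
    intro j
    rcases lt_or_eq_of_le (Nat.lt_succ_iff.mp j.isLt) with hlt | heq
    · have h1 : (j : ℕ) + 1 < p + 1 := by omega
      have hidx : ∀ h : (j : ℕ) + 1 - 1 < p + 1,
          (⟨(j : ℕ) + 1 - 1, h⟩ : Fin (p + 1)) = j := fun h => Fin.ext (by simp)
      rw [Module.End.mul_apply, hF j h1, map_smul,
        hE ⟨(j : ℕ) + 1, h1⟩ (Nat.succ_pos _), smul_smul, hidx]
      congr 1
      have hcalc : (σ * fCoef q p (j : ℕ)) * (σ * eCoef q p ((j : ℕ) + 1))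
          = fCoef q p (j : ℕ) * fCoef q p (j : ℕ) := by
        rw [eCoef_succ]
        calc _ = (σ * σ) * (fCoef q p (j : ℕ) * fCoef q p (j : ℕ)) := by ring
          _ = _ := by rw [hσ2, one_mul]
      rw [show ((⟨(j : ℕ) + 1, h1⟩ : Fin (p + 1)) : ℕ) = (j : ℕ) + 1 from rfl,
        ← Complex.ofReal_mul, hcalc]
    · have hj : j = Fin.last p := Fin.ext (by simpa using heq)
      rw [Module.End.mul_apply, hj, hFlast, map_zero]
      simp [Fin.val_last, fCoef_last]
  -- the product F∘E on basis vectors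
  have hFE : ∀ j : Fin (p + 1), (F * E) (EuclideanSpace.single j 1) =
      ((eCoef q p j * eCoef q p j : ℝ) : ℂ) • EuclideanSpace.single j 1 := by
    intro j
    rcases Nat.eq_zero_or_pos (j : ℕ) with h0 | hpos
    · have hj : j = 0 := Fin.ext (by simpa using h0)
      rw [Module.End.mul_apply, hj, hE0, map_zero]
      simp [eCoef_zero]
    · have h2 : ((⟨(j : ℕ) - 1, Nat.lt_of_le_of_lt (Nat.sub_le _ _) j.isLt⟩ :
          Fin (p + 1)) : ℕ) + 1 < p + 1 := by
        simp only [Fin.val_mk]; omega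
      have hidx : ∀ h : (j : ℕ) - 1 + 1 < p + 1,
          (⟨(j : ℕ) - 1 + 1, h⟩ : Fin (p + 1)) = j := fun h => Fin.ext (by simp; omega)
      rw [Module.End.mul_apply, hE j hpos, map_smul, hF _ h2, smul_smul]
      simp only [Fin.val_mk]
      rw [hidx]
      congr 1
      have hcalc : (σ * eCoef q p (j : ℕ)) * (σ * fCoef q p ((j : ℕ) - 1))
          = eCoef q p (j : ℕ) * eCoef q p (j : ℕ) := by
        rw [fCoef_pred hpos]
        calc _ = (σ * σ) * (eCoef q p (j : ℕ) * eCoef q p (j : ℕ)) := by ring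
          _ = _ := by rw [hσ2, one_mul]
      rw [← Complex.ofReal_mul, hcalc]
  -- inner products of basis vectors
  have hinner : ∀ i j : Fin (p + 1),
      (inner ℂ (EuclideanSpace.single i (1 : ℂ)) (EuclideanSpace.single j (1 : ℂ)) : ℂ)
        = if i = j then 1 else 0 := by
    intro i j
    rw [EuclideanSpace.inner_single_left]
    simp [EuclideanSpace.single_apply, eq_comm]
  refine ⟨⟨diagEnd (fun j => (kCoef q φ ψ p j)⁻¹), diagEnd (fun j => (kStarCoef q φ ψ p j)⁻¹),
    ?_, ?_, ?_, ?_, ?_⟩, ?_, ?_, ?_, ?_, ?_⟩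
  · apply end_ext; intro j
    simp [Module.End.mul_apply, diagEnd_single, map_smul, hK, smul_smul,
      inv_mul_cancel₀ (kCoef_ne_zero hq0 (j : ℕ))]
  · apply end_ext; intro j
    simp [Module.End.mul_apply, diagEnd_single, map_smul, hK, smul_smul,
      mul_inv_cancel₀ (kCoef_ne_zero hq0 (j : ℕ))]
  · apply end_ext; intro j
    simp [Module.End.mul_apply, diagEnd_single, map_smul, hK', smul_smul,
      inv_mul_cancel₀ (kStarCoef_ne_zero hq0 (j : ℕ))]
  · apply end_ext; intro j
    simp [Module.End.mul_apply, diagEnd_single, map_smul, hK', smul_smul,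
      mul_inv_cancel₀ (kStarCoef_ne_zero hq0 (j : ℕ))]
  -- the commutator relation
  · apply end_ext; intro j
    have hjp : (j : ℕ) ≤ p := Nat.lt_succ_iff.mp j.isLt
    rw [LinearMap.sub_apply, hEF j, hFE j, ← sub_smul,
      LinearMap.smul_apply, LinearMap.sub_apply, Module.End.mul_apply, Module.End.mul_apply,
      hK' j, map_smul, hK j, smul_smul, diagEnd_single, map_smul, diagEnd_single, smul_smul,
      ← sub_smul, smul_smul]
    congr 1
    have h1 : kStarCoef q φ ψ p j * kCoef q φ ψ p j
        = ((q ^ (2 * ((j : ℕ) : ℤ) - (p : ℤ)) : ℝ) : ℂ) := by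
      rw [mul_comm]; exact kmul hq0 _
    have h2 : (kStarCoef q φ ψ p j)⁻¹ * (kCoef q φ ψ p j)⁻¹
        = ((q ^ ((p : ℤ) - 2 * ((j : ℕ) : ℤ)) : ℝ) : ℂ) := by
      rw [← mul_inv, h1, ← Complex.ofReal_inv, ← zpow_neg, neg_sub]
    rw [h1, h2]
    have hre : fCoef q p j * fCoef q p j - eCoef q p j * eCoef q p j
        = (q⁻¹ - q)⁻¹ * (q ^ (2 * ((j : ℕ) : ℤ) - (p : ℤ)) - q ^ ((p : ℤ) - 2 * ((j : ℕ) : ℤ))) := by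
      rw [fCoef_sq hq0 hq1 hjp, eCoef_sq hq0 hq1 hjp, key_identity hq0 hq1]
    exact_mod_cast hre
  -- K and K' commute
  · apply end_ext; intro j
    simp [Module.End.mul_apply, hK, hK', map_smul, smul_smul, mul_comm]
  -- E K = q e^{-4iφ} K E
  · apply end_ext; intro j
    rcases Nat.eq_zero_or_pos (j : ℕ) with h0 | hpos
    · have hj : j = 0 := Fin.ext (by simpa using h0)
      rw [hj, Module.End.mul_apply, hK 0, map_smul, hE0, smul_zero, LinearMap.smul_apply,
        Module.End.mul_apply, hE0, map_zero, smul_zero]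
    · rw [Module.End.mul_apply, hK j, map_smul, hE j hpos, smul_smul,
        LinearMap.smul_apply, Module.End.mul_apply, hE j hpos, map_smul, hK _, smul_smul,
        smul_smul]
      congr 1
      simp only [Fin.val_mk]
      have hstep := kCoef_succ (φ := φ) (ψ := ψ) (p := p) hq0 ((j : ℕ) - 1)
      rw [show (j : ℕ) - 1 + 1 = (j : ℕ) from by omega] at hstep
      rw [hstep]; ring
  -- K F = q e^{-4iφ} F K
  · apply end_ext; intro j
    rcases lt_or_eq_of_le (Nat.lt_succ_iff.mp j.isLt) with hlt | heq
    · have h1 : (j : ℕ) + 1 < p + 1 := by omega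
      rw [Module.End.mul_apply, hF j h1, map_smul, hK _, smul_smul,
        LinearMap.smul_apply, Module.End.mul_apply, hK j, map_smul, hF j h1, smul_smul,
        smul_smul]
      congr 1
      simp only [Fin.val_mk]
      rw [kCoef_succ hq0 (j : ℕ)]; ring
    · have hj : j = Fin.last p := Fin.ext (by simpa using heq)
      rw [hj, Module.End.mul_apply, hFlast, map_zero, LinearMap.smul_apply,
        Module.End.mul_apply, hK _, map_smul, hFlast, smul_zero, smul_zero]
  -- adjoint of K is K'
  · have hKK' : K' = LinearMap.adjoint K := by
      rw [LinearMap.eq_adjoint_iff_basis (PiLp.basisFun 2 ℂ (Fin (p + 1)))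
        (PiLp.basisFun 2 ℂ (Fin (p + 1)))]
      intro i j
      simp only [PiLp.basisFun_apply]
      rw [hK' i, hK j, inner_smul_left, inner_smul_right, hinner]
      by_cases hij : i = j
      · subst hij
        simp [conj_kStarCoef]
      · simp [hij]
    exact hKK'.symm
  -- adjoint of E is F
  · have hEFadj : F = LinearMap.adjoint E := by
      rw [LinearMap.eq_adjoint_iff_basis (PiLp.basisFun 2 ℂ (Fin (p + 1)))
        (PiLp.basisFun 2 ℂ (Fin (p + 1)))]
      intro i j
      have hip : (i : ℕ) ≤ p := Nat.lt_succ_iff.mp i.isLt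
      have hjp : (j : ℕ) ≤ p := Nat.lt_succ_iff.mp j.isLt
      simp only [PiLp.basisFun_apply]
      rcases lt_or_eq_of_le hip with hiplt | hipeq
      · have h1 : (i : ℕ) + 1 < p + 1 := by omega
        rw [hF i h1, inner_smul_left, hinner]
        rcases Nat.eq_zero_or_pos (j : ℕ) with hj0 | hjpos
        · have hj : j = 0 := Fin.ext (by simpa using hj0)
          rw [hj, hE0, inner_zero_right]
          rw [if_neg (fun h => absurd (congrArg Fin.val h) (by rw [Fin.val_zero]; exact Nat.succ_ne_zero _)), mul_zero]
        · rw [hE j hjpos, inner_smul_right, hinner]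
          by_cases hij : (i : ℕ) + 1 = (j : ℕ)
          · rw [if_pos (Fin.ext (by simp [hij])), if_pos (Fin.ext (by simp; omega))]
            rw [mul_one, mul_one, Complex.conj_ofReal]
            norm_cast
            rw [show (j : ℕ) = (i : ℕ) + 1 from hij.symm, eCoef_succ]
          · rw [if_neg (by simp [Fin.ext_iff]; omega), if_neg (by simp [Fin.ext_iff]; omega),
              mul_zero, mul_zero]
      · have hi : i = Fin.last p := Fin.ext (by simpa using hipeq)
        rw [hi, hFlast, inner_zero_left]
        rcases Nat.eq_zero_or_pos (j : ℕ) with hj0 | hjpos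
        · have hj : j = 0 := Fin.ext (by simpa using hj0)
          rw [hj, hE0, inner_zero_right]
        · rw [hE j hjpos, inner_smul_right, hinner]
          rw [if_neg (by simp [Fin.ext_iff, Fin.val_last]; omega), mul_zero]
    exact hEFadj.symm
end
end

section
/- Fix 0 < q < 1 and φ ∈ ℝ (so that q e^{−4iφ} is automatically not a root of unity). Let V be a nonzero finite-dimensional complex inner product space and let E, F, K be linear endomorphisms of V with K invertible and normal (K K† = K† K, where K† is the Hilbert adjoint of K), satisfying: E K = q e^{−4iφ} K E; K F = q e^{−4iφ} F K; and E F − F E = (K K† − K⁻¹ (K†)⁻¹)/(q⁻¹ − q). Assume the family is irreducible: the only subspaces of V invariant under all of E, F, K, K† are {0} and V. Then there exist p ∈ ℕ with dim V = p + 1, a phase ψ ∈ ℝ, a sign σ ∈ {1, −1}, and a basis (v_0, …, v_p) of V such that: K v_j = q^{j−p/2} exp(−i(4(j−p/2)φ + ψ)) v_j; K† v_j = q^{j−p/2} exp(i(4(j−p/2)φ + ψ)) v_j; F v_j = σ √([p−j]_q [j+1]_q) v_{j+1} (with F v_p = 0); and E v_j = σ √([j]_q [p−j+1]_q) v_{j−1}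 (with E v_0 = 0). In other words, every finite-dimensional irreducible representation of the braided algebra U_{q,φ}(û(2)) is equivalent to one of the representations T_{l,ψ}, l = p/2. -/
noncomputable section

-- Auxiliary lemmas

theorem uqu2_aux_normal_eig {V : Type*} [NormedAddCommGroup V] [InnerProductSpace ℂ V]
    [FiniteDimensional ℂ V] (K : Module.End ℂ V)
    (h : K * LinearMap.adjoint K = LinearMap.adjoint K * K) {c : ℂ} {v : V}
    (hv : K v = c • v) : LinearMap.adjoint K v = (starRingEnd ℂ c) • v := by
  have key : (inner ℂ (LinearMap.adjoint K v - (starRingEnd ℂ c) • v)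
      (LinearMap.adjoint K v - (starRingEnd ℂ c) • v) : ℂ) = 0 := by
    have h1 : (inner ℂ (LinearMap.adjoint K v) (LinearMap.adjoint K v) : ℂ)
        = inner ℂ (K v) (K v) := by
      rw [LinearMap.adjoint_inner_left]
      have : K (LinearMap.adjoint K v) = LinearMap.adjoint K (K v) := by
        have := congrArg (fun T : Module.End ℂ V => T v) h
        simpa [Module.End.mul_apply] using this
      rw [this, LinearMap.adjoint_inner_right]
    have h2 : (inner ℂ (LinearMap.adjoint K v) v : ℂ) = c * inner ℂ v v := by
      rw [LinearMap.adjoint_inner_left, hv, inner_smul_right]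
    have h3 : (inner ℂ v (LinearMap.adjoint K v) : ℂ) = (starRingEnd ℂ c) * inner ℂ v v := by
      rw [LinearMap.adjoint_inner_right, hv, inner_smul_left]
    simp only [inner_sub_sub_self, inner_smul_left, inner_smul_right, h1, h2, h3, hv,
      RingHom.map_mul, RingHomCompTriple.comp_apply, RingHom.id_apply, starRingEnd_self_apply]
    ring
  exact sub_eq_zero.mp (inner_self_eq_zero.mp key)

theorem uqu2_aux_qInt_pos {q : ℝ} (hq0 : 0 < q) (hq1 : q < 1) {n : ℤ} (hn : 1 ≤ n) :
    0 < qInt q n := by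
  have h1 : q ^ n < 1 := by
    calc q ^ n ≤ q ^ (1:ℤ) := zpow_le_zpow_right_of_le_one₀ hq0 (le_of_lt hq1) hn
      _ = q := zpow_one q
      _ < 1 := hq1
  have h2 : (1:ℝ) < q ^ (-n) := by
    rw [zpow_neg]
    exact (one_lt_inv₀ (zpow_pos hq0 n)).mpr h1
  have hd : q - q⁻¹ < 0 := by
    have : (1:ℝ) < q⁻¹ := (one_lt_inv₀ hq0).mpr hq1
    linarith
  have hnum : q ^ n - q ^ (-n) < 0 := by linarith
  exact div_pos_of_neg_of_neg hnum hd

theorem uqu2_aux_eig_inv {V : Type*} [AddCommGroup V] [Module ℂ V]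
    {A B : Module.End ℂ V} (h : A * B = 1) {c : ℂ} (hc : c ≠ 0) {x : V}
    (hx : B x = c • x) : A x = c⁻¹ • x := by
  have h1 : A (B x) = x := by rw [← Module.End.mul_apply, h]; rfl
  rw [hx, map_smul] at h1
  calc A x = c⁻¹ • (c • A x) := by rw [smul_smul, inv_mul_cancel₀ hc, one_smul]
    _ = c⁻¹ • x := by rw [h1]

theorem uqu2_aux_inv_sub_one_ne {x : ℝ} (hx0 : x ≠ 0) (hx1 : x ≠ 1) : x⁻¹ - 1 ≠ 0 := by
  intro h
  apply hx1
  have : x⁻¹ = 1 := by linarith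
  have := congrArg (fun y => y⁻¹) this
  simpa using this

theorem uqu2_aux_aSum_closed (x s : ℝ) (hx0 : x ≠ 0) (hx1 : x ≠ 1) (hs : s ≠ 0) (C : ℝ) (j : ℕ) :
    ∑ i ∈ Finset.range j, C * (x^i * s - (x^i)⁻¹ * s⁻¹)
      = C * ((x^j - 1)/(x-1)) * (s - s⁻¹ * x * (x^j)⁻¹) := by
  have hx1' : x - 1 ≠ 0 := sub_ne_zero.mpr hx1
  induction j with
  | zero => simp
  | succ n ih =>
    rw [Finset.sum_range_succ, ih]
    have hxn : x ^ n ≠ 0 := pow_ne_zero _ hx0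
    field_simp
    ring

theorem uqu2_aux_qInt_natCast (q : ℝ) (n : ℕ) :
    qInt q (n:ℤ) = (q^n - (q^n)⁻¹)/(q - q⁻¹) := by
  rw [qInt, ← zpow_natCast q n, zpow_neg]

theorem uqu2_aux_solve_s (q s : ℝ) (hq0 : q ≠ 0) (hs : s ≠ 0) (p : ℕ)
    (h : s - s⁻¹ * q^2 * ((q^2)^(p+1))⁻¹ = 0) (hpos : 0 < q^p * s) : q^p * s = 1 := by
  have hx : (q:ℝ)^2 ≠ 0 := pow_ne_zero _ hq0
  have hxp : ((q:ℝ)^2)^(p+1) ≠ 0 := pow_ne_zero _ hx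
  have h5 : s^2 * (q^2)^(p+1) = q^2 := by
    have h' : s = s⁻¹ * q^2 * ((q^2)^(p+1))⁻¹ := by linarith [h]
    calc s^2 * (q^2)^(p+1) = s * (s⁻¹ * q^2 * ((q^2)^(p+1))⁻¹) * (q^2)^(p+1) := by
          rw [← h']; ring
      _ = (s * s⁻¹) * q^2 * (((q^2)^(p+1))⁻¹ * (q^2)^(p+1)) := by ring
      _ = q^2 := by rw [mul_inv_cancel₀ hs, inv_mul_cancel₀ hxp]; ring
  have h6 : s^2 * (q^2)^p = 1 := by
    rw [pow_succ] at h5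
    apply mul_right_cancel₀ hx
    linear_combination h5
  have e : (q^p * s)^2 = 1 := by
    have hqp : ((q:ℝ)^p)^2 = (q^2)^p := by rw [← pow_mul, ← pow_mul, mul_comm]
    rw [mul_pow, hqp]
    linear_combination h6
  have : (q^p*s - 1)*(q^p*s+1) = 0 := by linear_combination e
  rcases mul_eq_zero.mp this with h' | h' <;> linarith

theorem uqu2_aux_a_val (q t u : ℝ) (hq : q ≠ 0) (ht : t ≠ 0) (hu : u ≠ 0) (h1 : q^2 - 1 ≠ 0) :
    (q⁻¹ - q)⁻¹ * (((t*q)^2 - 1)/(q^2-1)) * (u⁻¹ - u * q^2 * ((t*q)^2)⁻¹)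
      = (u/t - (u/t)⁻¹)/(q - q⁻¹) * ((t*q - (t*q)⁻¹)/(q - q⁻¹)) := by
  have h2 : q - q⁻¹ ≠ 0 := by
    intro h; apply h1; field_simp at h; nlinarith [h]
  have h3 : q⁻¹ - q ≠ 0 := by intro h; apply h2; linarith
  have e1 : (q⁻¹ - q)⁻¹ = -q/(q^2-1) := by
    have hA : q⁻¹ - q = (q^2-1)/(-q) := by
      rw [eq_div_iff (neg_ne_zero.mpr hq)]
      field_simp
      ring
    rw [hA, inv_div, neg_div]
  have e2 : q - q⁻¹ = (q^2-1)/q := by field_simp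
  have e3 : (u/t)⁻¹ = t/u := by rw [inv_div]
  rw [e1, e2, e3]
  field_simp
  ring

theorem uqu2_aux_pow_inj {r : ℝ} (hr0 : 0 < r) (hr1 : r ≠ 1) {m n : ℕ}
    (h : r ^ m = r ^ n) : m = n := by
  by_contra hne
  have key : ∀ {a b : ℕ}, a < b → r^a ≠ r^b := by
    intro a b hab
    rcases lt_or_gt_of_ne hr1 with hlt | hgt
    · exact ne_of_gt (pow_lt_pow_right_of_lt_one₀ hr0 hlt hab)
    · exact ne_of_lt (pow_lt_pow_right₀ hgt hab)
  rcases Nat.lt_or_ge m n with hmn | hmn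
  · exact key hmn h
  · exact key (by omega) h.symm

theorem uqu2_aux_geom_inj {q : ℝ} (hq0 : 0 < q) (hq1 : q ≠ 1) {μ b : ℂ}
    (hb : b ≠ 0) (habs : ‖μ‖ = q) :
    Function.Injective fun n : ℕ => μ ^ n * b := by
  intro m n h
  have hB : ‖b‖ ≠ 0 := by simpa using hb
  have h2 : q ^ m = q ^ n := by
    have := congrArg (‖·‖) h
    simp only [norm_mul, norm_pow, habs] at this
    exact mul_right_cancel₀ hB this
  exact uqu2_aux_pow_inj hq0 hq1 h2

theorem uqu2_aux_eCoef_succ (q : ℝ) (p i : ℕ) : eCoef q p (i+1) = fCoef q p i := by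
  unfold eCoef fCoef
  rw [show ((i+1 : ℕ) : ℤ) = (i : ℤ) + 1 by push_cast; ring]
  rw [show (p : ℤ) - ((i:ℤ)+1) + 1 = (p:ℤ) - (i:ℤ) by ring]
  rw [mul_comm]

theorem uqu2_aux_kCoef_eq (q φ θ : ℝ) (hq0 : 0 < q) (p j : ℕ) :
    kCoef q φ (2*p*φ - θ) p j
      = ((q:ℂ) * Complex.exp (-4 * Complex.I * (φ:ℂ)))^j *
        (((q ^ (-(p:ℝ)/2) : ℝ) : ℂ) * Complex.exp ((θ:ℂ) * Complex.I)) := by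
  have hr : (q ^ ((j:ℝ) - (p:ℝ)/2) : ℝ) = q ^ (j:ℕ) * q ^ (-(p:ℝ)/2) := by
    rw [show (j:ℝ) - (p:ℝ)/2 = (j:ℝ) + (-(p:ℝ)/2) by ring, Real.rpow_add hq0,
      Real.rpow_natCast]
  have hR : ((q:ℂ) * Complex.exp (-4 * Complex.I * (φ:ℂ)))^j *
        (((q ^ (-(p:ℝ)/2) : ℝ) : ℂ) * Complex.exp ((θ:ℂ) * Complex.I))
      = ((q ^ (j:ℕ) * q ^ (-(p:ℝ)/2) : ℝ) : ℂ) *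
        Complex.exp ((j:ℕ) * (-4 * Complex.I * (φ:ℂ)) + (θ:ℂ) * Complex.I) := by
    rw [Complex.exp_add, Complex.exp_nat_mul, mul_pow]
    push_cast
    ring
  rw [kCoef, hr, hR]
  congr 1
  push_cast
  ring

theorem uqu2_aux_kStarCoef (q φ ψ : ℝ) (p j : ℕ) :
    kStarCoef q φ ψ p j = starRingEnd ℂ (kCoef q φ ψ p j) := by
  rw [kCoef, kStarCoef, map_mul, Complex.conj_ofReal, ← Complex.exp_conj]
  congr 1
  simp only [map_mul, map_add, map_neg, Complex.conj_I, Complex.conj_ofReal, map_ofNat,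
    map_sub, map_div₀]
  push_cast
  ring

set_option maxHeartbeats 1000000 in
/-- Every finite-dimensional irreducible representation of the braided algebra
`U_{q,φ}(û(2))` (given by operators `E, F, K` with `K` invertible and normal, satisfying
the defining relations, with no nontrivial invariant subspace) is equivalent to one of
the representations `T_{l,ψ}`, `l = p/2`. -/
theorem uqu2_classification_of_irreducibles
    (q φ : ℝ) (hq0 : 0 < q) (hq1 : q < 1)
    {V : Type*} [NormedAddCommGroup V] [InnerProductSpace ℂ V]
    [FiniteDimensional ℂ V] [Nontrivial V]
    (E F K Kinv : Module.End ℂ V)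
    (hKinv : K * Kinv = 1) (hKinv' : Kinv * K = 1)
    (hnormal : K * LinearMap.adjoint K = LinearMap.adjoint K * K)
    (hEK : E * K = ((q : ℂ) * Complex.exp (-4 * Complex.I * (φ : ℂ))) • (K * E))
    (hKF : K * F = ((q : ℂ) * Complex.exp (-4 * Complex.I * (φ : ℂ))) • (F * K))
    (hEF : E * F - F * E =
      ((q : ℂ)⁻¹ - (q : ℂ))⁻¹ •
        (K * LinearMap.adjoint K - Kinv * LinearMap.adjoint Kinv))
    (hirr : ∀ W : Submodule ℂ V,
      (∀ v ∈ W, E v ∈ W) → (∀ v ∈ W, F v ∈ W) →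
      (∀ v ∈ W, K v ∈ W) → (∀ v ∈ W, LinearMap.adjoint K v ∈ W) →
      W = ⊥ ∨ W = ⊤) :
    ∃ (p : ℕ) (ψ σ : ℝ) (b : Module.Basis (Fin (p + 1)) ℂ V),
      Module.finrank ℂ V = p + 1 ∧
      (σ = 1 ∨ σ = -1) ∧
      (∀ j : Fin (p + 1), K (b j) = kCoef q φ ψ p j • b j) ∧
      (∀ j : Fin (p + 1), LinearMap.adjoint K (b j) = kStarCoef q φ ψ p j • b j) ∧
      (∀ (j : Fin (p + 1)) (h : (j : ℕ) + 1 < p + 1),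
        F (b j) = ((σ * fCoef q p j : ℝ) : ℂ) • b (⟨(j : ℕ) + 1, h⟩ : Fin (p + 1))) ∧
      F (b (Fin.last p)) = 0 ∧
      (∀ (j : Fin (p + 1)) (h : 0 < (j : ℕ)),
        E (b j) = ((σ * eCoef q p j : ℝ) : ℂ) •
          b (⟨(j : ℕ) - 1, Nat.lt_of_le_of_lt (Nat.sub_le _ _) j.isLt⟩ : Fin (p + 1))) ∧
      E (b (0 : Fin (p + 1))) = 0 := by
  classical
  have hqC : (q : ℂ) ≠ 0 := by exact_mod_cast hq0.ne'
  have hqne1 : q ≠ 1 := ne_of_lt hq1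
  set μ : ℂ := (q : ℂ) * Complex.exp (-4 * Complex.I * (φ : ℂ)) with hμdef
  have hμ0 : μ ≠ 0 := mul_ne_zero hqC (Complex.exp_ne_zero _)
  have habsμ : ‖μ‖ = q := by
    rw [hμdef, norm_mul, Complex.norm_exp]
    have h0 : (-4 * Complex.I * (φ:ℂ)).re = 0 := by simp
    rw [h0, Real.exp_zero, Complex.norm_of_nonneg hq0.le, mul_one]
  have hnormSqμ : Complex.normSq μ = q^2 := by
    rw [← Complex.sq_norm, habsμ]
  -- pointwise relations
  have hKE : ∀ x : V, K (E x) = μ⁻¹ • E (K x) := by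
    intro x
    have h := congrArg (fun T : Module.End ℂ V => T x) hEK
    simp only [Module.End.mul_apply, LinearMap.smul_apply] at h
    rw [h, smul_smul, inv_mul_cancel₀ hμ0, one_smul]
  have hKF' : ∀ x : V, K (F x) = μ • F (K x) := by
    intro x
    have h := congrArg (fun T : Module.End ℂ V => T x) hKF
    simpa only [Module.End.mul_apply, LinearMap.smul_apply] using h
  -- no infinite eigenvector families
  have hfin : ∀ (c : ℕ → ℂ) (w : ℕ → V), Function.Injective c →
      (∀ n, K (w n) = c n • w n) → ¬ (∀ n, w n ≠ 0) := by
    intro c w hinj hKw hne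
    have hli : LinearIndependent ℂ w :=
      Module.End.eigenvectors_linearIndependent' K c hinj w
        (fun n => ⟨Module.End.mem_eigenspace_iff.mpr (hKw n), hne n⟩)
    have hcard := hli.lt_aleph0_of_finite
    rw [Cardinal.mk_nat] at hcard
    exact lt_irrefl _ hcard
  -- start from an eigenvector of K
  obtain ⟨ν, hν⟩ := Module.End.exists_eigenvalue K
  obtain ⟨u, hu⟩ := hν.exists_hasEigenvector
  have hKu : K u = ν • u := hu.apply_eq_smul
  have hν0 : ν ≠ 0 := by
    intro h
    apply hu.right
    have h1 : Kinv (K u) = u := by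
      rw [← Module.End.mul_apply, hKinv', Module.End.one_apply]
    rw [hKu, h, zero_smul, map_zero] at h1
    exact h1.symm
  -- climb with E to a highest weight vector
  have hEchain : ∀ n : ℕ, K ((E^n) u) = ((μ⁻¹)^n * ν) • (E^n) u := by
    intro n
    induction n with
    | zero => simpa using hKu
    | succ n ih =>
      have hstep : (E^(n+1)) u = E ((E^n) u) := by rw [pow_succ']; rfl
      rw [hstep, hKE, ih, map_smul, smul_smul, ← hstep]
      congr 1
      ring
  have hex1 : ∃ n : ℕ, (E^n) u = 0 := by
    by_contra hno
    push_neg at hno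
    refine hfin (fun n => (μ⁻¹)^n * ν) (fun n => (E^n) u) ?_ hEchain hno
    refine uqu2_aux_geom_inj (inv_pos.mpr hq0) ?_ hν0 ?_
    · intro h; exact hqne1 (by rw [← inv_inv q, h, inv_one])
    · rw [norm_inv, habsμ]
  have hn₀pos : 0 < Nat.find hex1 := by
    rcases Nat.eq_zero_or_pos (Nat.find hex1) with h | h
    · exfalso
      have hsp := Nat.find_spec hex1
      rw [h] at hsp
      simp only [pow_zero, Module.End.one_apply] at hsp
      exact hu.right hsp
    · exact h
  set v₀ : V := (E^(Nat.find hex1 - 1)) u with hv₀def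
  have hv₀ne : v₀ ≠ 0 := Nat.find_min hex1 (Nat.sub_lt hn₀pos one_pos)
  have hEv₀ : E v₀ = 0 := by
    have hsp := Nat.find_spec hex1
    rw [← Nat.succ_pred_eq_of_pos hn₀pos, pow_succ'] at hsp
    exact hsp
  set lam : ℂ := (μ⁻¹)^(Nat.find hex1 - 1) * ν with hlamdef
  have hKv₀ : K v₀ = lam • v₀ := hEchain _
  have hlam0 : lam ≠ 0 := mul_ne_zero (pow_ne_zero _ (inv_ne_zero hμ0)) hν0
  -- the F-chain
  set v : ℕ → V := fun j => (F^j) v₀ with hvdef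
  have hv0 : v 0 = v₀ := by rw [hvdef]; simp
  have hvsucc : ∀ j, v (j+1) = F (v j) := by
    intro j; rw [hvdef]; simp only [pow_succ']; rfl
  set c : ℕ → ℂ := fun j => μ^j * lam with hcdef
  have hc0 : ∀ j, c j ≠ 0 := fun j => mul_ne_zero (pow_ne_zero _ hμ0) hlam0
  have hKv : ∀ j, K (v j) = c j • v j := by
    intro j
    induction j with
    | zero => rw [hv0]; simpa [hcdef] using hKv₀
    | succ j ih =>
      rw [hvsucc, hKF', ih, map_smul, smul_smul, ← hvsucc]
      congr 1
      simp only [hcdef]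
      ring
  have hK'v : ∀ j, LinearMap.adjoint K (v j) = (starRingEnd ℂ (c j)) • v j :=
    fun j => uqu2_aux_normal_eig K hnormal (hKv j)
  have hadj1 : LinearMap.adjoint Kinv * LinearMap.adjoint K = 1 := by
    rw [← LinearMap.star_eq_adjoint, ← LinearMap.star_eq_adjoint, ← star_mul, hKinv, star_one]
  have hKinvv : ∀ j, Kinv (v j) = (c j)⁻¹ • v j :=
    fun j => uqu2_aux_eig_inv hKinv' (hc0 j) (hKv j)
  have hK'invv : ∀ j, LinearMap.adjoint Kinv (v j) = ((starRingEnd ℂ) (c j))⁻¹ • v j :=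
    fun j => uqu2_aux_eig_inv hadj1 (by simpa using hc0 j) (hK'v j)
  -- modulus data
  set s : ℝ := Complex.normSq lam with hsdef
  have hs0 : 0 < s := by rw [hsdef]; exact Complex.normSq_pos.mpr hlam0
  have hcc : ∀ j : ℕ, (c j) * (starRingEnd ℂ) (c j) = (((q^2)^j * s : ℝ) : ℂ) := by
    intro j
    rw [Complex.mul_conj]
    norm_cast
    simp only [hcdef]
    rw [Complex.normSq_mul, map_pow, hnormSqμ, ← hsdef]
  have hqq : 0 < q⁻¹ - q := by
    have h1 : 1 < q⁻¹ := (one_lt_inv₀ hq0).mpr hq1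
    nlinarith
  -- commutator action on the chain
  have hcomm : ∀ j, E (F (v j)) - F (E (v j))
      = (((q⁻¹ - q)⁻¹ * ((q^2)^j * s - ((q^2)^j)⁻¹ * s⁻¹) : ℝ) : ℂ) • v j := by
    intro j
    have h := congrArg (fun T : Module.End ℂ V => T (v j)) hEF
    simp only [LinearMap.sub_apply, Module.End.mul_apply, LinearMap.smul_apply] at h
    rw [hK'v, map_smul, hKv, hK'invv, map_smul, hKinvv] at h
    rw [h, smul_smul, smul_smul, ← sub_smul, smul_smul]
    congr 1
    have hN : (starRingEnd ℂ) (c j) * c j = (((q^2)^j * s : ℝ) : ℂ) := by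
      rw [mul_comm]; exact hcc j
    have hNinv : ((starRingEnd ℂ) (c j))⁻¹ * (c j)⁻¹ = ((((q^2)^j * s : ℝ) : ℂ))⁻¹ := by
      rw [← mul_inv, hN]
    rw [hN, hNinv]
    push_cast
    ring
  -- the lowering coefficients
  set a : ℕ → ℝ :=
    fun n => ∑ i ∈ Finset.range n, (q⁻¹ - q)⁻¹ * ((q^2)^i * s - ((q^2)^i)⁻¹ * s⁻¹) with hadef
  have hEv0 : E (v 0) = 0 := by rw [hv0]; exact hEv₀
  have hEv : ∀ j, E (v (j+1)) = ((a (j+1) : ℝ) : ℂ) • v j := by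
    intro j
    induction j with
    | zero =>
      rw [hvsucc 0]
      have h := hcomm 0
      rw [hEv0, map_zero, sub_zero] at h
      rw [h]
      congr 2
      simp only [hadef]
      rw [Finset.sum_range_one]
    | succ j ih =>
      rw [hvsucc (j+1)]
      have h := hcomm (j+1)
      have h2 : E (F (v (j+1))) = F (E (v (j+1)))
          + (((q⁻¹ - q)⁻¹ * ((q^2)^(j+1) * s - ((q^2)^(j+1))⁻¹ * s⁻¹) : ℝ) : ℂ) • v (j+1) := by
        rw [← h]; ring_nf
        abel
      rw [h2, ih, map_smul, ← hvsucc, ← add_smul]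
      congr 1
      have h3 : a (j+1+1) = a (j+1)
          + (q⁻¹ - q)⁻¹ * ((q^2)^(j+1) * s - ((q^2)^(j+1))⁻¹ * s⁻¹) := by
        simp only [hadef]
        rw [Finset.sum_range_succ]
      rw [h3]
      push_cast
      ring
  -- the chain terminates
  have hex2 : ∃ j : ℕ, v j = 0 := by
    by_contra hno
    push_neg at hno
    exact hfin c v (uqu2_aux_geom_inj hq0 hqne1 hlam0 habsμ) hKv hno
  have hPpos : 0 < Nat.find hex2 := by
    rcases Nat.eq_zero_or_pos (Nat.find hex2) with h | h
    · exfalso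
      have hsp := Nat.find_spec hex2
      rw [h, hv0] at hsp
      exact hv₀ne hsp
    · exact h
  set p : ℕ := Nat.find hex2 - 1 with hpdef
  have hfindp : Nat.find hex2 = p + 1 := by omega
  have hvne : ∀ j ≤ p, v j ≠ 0 := fun j hj => Nat.find_min hex2 (by omega)
  have hvp : v p ≠ 0 := hvne p le_rfl
  have hvp1 : v (p+1) = 0 := by rw [← hfindp]; exact Nat.find_spec hex2
  have hap1 : a (p+1) = 0 := by
    have h := hEv p
    rw [hvp1, map_zero] at h
    have h2 := (smul_eq_zero.mp h.symm).resolve_right hvp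
    exact_mod_cast h2
  -- solve for the modulus
  have hx0 : (q:ℝ)^2 ≠ 0 := pow_ne_zero _ (ne_of_gt hq0)
  have hxlt : (q:ℝ)^2 < 1 := by nlinarith
  have hx1 : (q:ℝ)^2 ≠ 1 := ne_of_lt hxlt
  have haclosed : ∀ j, a j
      = (q⁻¹-q)⁻¹ * (((q^2)^j - 1)/(q^2-1)) * (s - s⁻¹ * (q^2) * ((q^2)^j)⁻¹) := by
    intro j
    simp only [hadef]
    exact uqu2_aux_aSum_closed (q^2) s hx0 hx1 (ne_of_gt hs0) _ j
  have hbracket : s - s⁻¹ * q^2 * ((q^2)^(p+1))⁻¹ = 0 := by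
    have h := hap1
    rw [haclosed] at h
    have hG : ((q^2)^(p+1) - 1)/(q^2-1) ≠ 0 := by
      have h1 : ((q:ℝ)^2)^(p+1) < 1 := pow_lt_one₀ (by positivity) hxlt (Nat.succ_ne_zero p)
      exact div_ne_zero (by linarith) (by linarith)
    rcases mul_eq_zero.mp h with h' | h'
    · rcases mul_eq_zero.mp h' with h'' | h''
      · exact absurd h'' (inv_ne_zero (ne_of_gt hqq))
      · exact absurd h'' hG
    · exact h'
  have hqps : q^p * s = 1 :=
    uqu2_aux_solve_s q s (ne_of_gt hq0) (ne_of_gt hs0) p hbracket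
      (mul_pos (pow_pos hq0 p) hs0)
  have hsval : s = (q^p)⁻¹ := eq_inv_of_mul_eq_one_left (by linear_combination hqps)
  have hsinv : s⁻¹ = q^p := by rw [hsval, inv_inv]
  -- values of the lowering coefficients
  have haval : ∀ j, j ≤ p → a (j+1) = qInt q ((p:ℤ) - (j:ℤ)) * qInt q ((j:ℤ)+1) := by
    intro j hj
    have e1 : ((q:ℝ)^2)^(j+1) = (q^j * q)^2 := by
      rw [← pow_succ, ← pow_mul, ← pow_mul, mul_comm]
    rw [haclosed, hsinv, hsval, e1]
    rw [uqu2_aux_a_val q (q^j) (q^p) (ne_of_gt hq0) (pow_ne_zero _ (ne_of_gt hq0))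
      (pow_ne_zero _ (ne_of_gt hq0)) (by intro h; exact hx1 (by linarith))]
    have e2 : (q:ℝ)^p / q^j = q^(p-j) := by
      rw [pow_sub₀ q (ne_of_gt hq0) hj, div_eq_mul_inv]
    have e3 : (q:ℝ)^j * q = q^(j+1) := (pow_succ q j).symm
    rw [e2, e3, ← uqu2_aux_qInt_natCast, ← uqu2_aux_qInt_natCast]
    have e4 : ((p-j : ℕ) : ℤ) = (p:ℤ) - (j:ℤ) := by omega
    have e5 : ((j+1 : ℕ) : ℤ) = (j:ℤ) + 1 := by push_cast; ring
    rw [e4, e5]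
  have hfCpos : ∀ i, i < p → 0 < fCoef q p i := by
    intro i hi
    rw [fCoef]
    apply Real.sqrt_pos.mpr
    exact mul_pos (uqu2_aux_qInt_pos hq0 hq1 (by omega)) (uqu2_aux_qInt_pos hq0 hq1 (by omega))
  have hfsq : ∀ i, i < p → fCoef q p i ^ 2 = a (i+1) := by
    intro i hi
    rw [fCoef, Real.sq_sqrt, haval i (le_of_lt hi)]
    exact le_of_lt (mul_pos (uqu2_aux_qInt_pos hq0 hq1 (by omega))
      (uqu2_aux_qInt_pos hq0 hq1 (by omega)))
  -- the rescaling
  set T : ℕ → ℝ := fun j => ∏ i ∈ Finset.range j, (fCoef q p i)⁻¹ with hTdef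
  have hTpos : ∀ j, j ≤ p → 0 < T j := by
    intro j hj
    rw [hTdef]
    apply Finset.prod_pos
    intro i hi
    rw [Finset.mem_range] at hi
    exact inv_pos.mpr (hfCpos i (by omega))
  have hTsucc : ∀ j, T (j+1) = T j * (fCoef q p j)⁻¹ := by
    intro j
    simp only [hTdef]
    rw [Finset.prod_range_succ]
  -- linear independence and spanning
  have hcinj : Function.Injective fun i : Fin (p+1) => c (i:ℕ) :=
    (uqu2_aux_geom_inj hq0 hqne1 hlam0 habsμ).comp Fin.val_injective
  have hli : LinearIndependent ℂ (fun i : Fin (p+1) => v (i:ℕ)) :=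
    Module.End.eigenvectors_linearIndependent' K (fun i : Fin (p+1) => c (i:ℕ)) hcinj _
      (fun i => ⟨Module.End.mem_eigenspace_iff.mpr (hKv i),
        hvne i (Nat.lt_succ_iff.mp i.isLt)⟩)
  set W : Submodule ℂ V := Submodule.span ℂ (Set.range (fun i : Fin (p+1) => v (i:ℕ)))
    with hWdef
  have hmemW : ∀ j, j ≤ p → v j ∈ W := by
    intro j hj
    apply Submodule.subset_span
    exact ⟨⟨j, by omega⟩, rfl⟩
  have hmemW' : ∀ j, j ≤ p + 1 → v j ∈ W := by
    intro j hj
    rcases Nat.lt_or_ge j (p+1) with h | h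
    · exact hmemW j (by omega)
    · have hj' : j = p + 1 := by omega
      rw [hj', hvp1]
      exact W.zero_mem
  have hstab : ∀ (L : Module.End ℂ V), (∀ i : Fin (p+1), L (v (i:ℕ)) ∈ W) →
      ∀ x ∈ W, L x ∈ W := by
    intro L hL x hx
    have hle : W ≤ W.comap L := by
      rw [hWdef]
      apply Submodule.span_le.mpr
      rintro y ⟨i, rfl⟩
      exact hL i
    exact hle hx
  have hWtop : W = ⊤ := by
    have hE' : ∀ x ∈ W, E x ∈ W := by
      apply hstab
      intro i
      rcases Nat.eq_zero_or_pos (i:ℕ) with h0 | h0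
      · rw [h0, hEv0]; exact W.zero_mem
      · obtain ⟨k, hk⟩ := Nat.exists_eq_add_of_lt h0
        rw [show (i:ℕ) = k + 1 by omega, hEv k]
        exact W.smul_mem _ (hmemW k (by have := i.isLt; omega))
    have hF' : ∀ x ∈ W, F x ∈ W := by
      apply hstab
      intro i
      rw [← hvsucc]
      exact hmemW' _ (by have := i.isLt; omega)
    have hK1 : ∀ x ∈ W, K x ∈ W := by
      apply hstab
      intro i
      rw [hKv]
      exact W.smul_mem _ (hmemW _ (Nat.lt_succ_iff.mp i.isLt))
    have hK2 : ∀ x ∈ W, LinearMap.adjoint K x ∈ W := by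
      apply hstab
      intro i
      rw [hK'v]
      exact W.smul_mem _ (hmemW _ (Nat.lt_succ_iff.mp i.isLt))
    rcases hirr W hE' hF' hK1 hK2 with h | h
    · exfalso
      apply hv₀ne
      have hm := hmemW 0 (Nat.zero_le p)
      rw [h] at hm
      rw [← hv0]
      exact (Submodule.mem_bot ℂ).mp hm
    · exact h
  have hsp : ⊤ ≤ Submodule.span ℂ (Set.range (fun i : Fin (p+1) => v (i:ℕ))) := by
    rw [← hWdef, hWtop]
  let bv : Module.Basis (Fin (p+1)) ℂ V := Module.Basis.mk hli hsp
  let Tu : Fin (p+1) → ℂˣ := fun i => Units.mk0 ((T (i:ℕ) : ℝ) : ℂ)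
    (by exact_mod_cast ne_of_gt (hTpos _ (Nat.lt_succ_iff.mp i.isLt)))
  let b : Module.Basis (Fin (p+1)) ℂ V := bv.unitsSMul Tu
  have hb : ∀ i : Fin (p+1), b i = ((T (i:ℕ) : ℝ) : ℂ) • v (i:ℕ) := by
    intro i
    show (bv.unitsSMul Tu) i = _
    rw [Module.Basis.unitsSMul_apply, Module.Basis.mk_apply]
    rfl
  -- eigenvalue bookkeeping
  have habslam : ‖lam‖ = q ^ (-(p:ℝ)/2) := by
    have h2 : (q ^ (-(p:ℝ)/2) : ℝ)^2 = (q^p)⁻¹ := by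
      rw [← Real.rpow_natCast (q ^ (-(p:ℝ)/2)) 2, ← Real.rpow_mul (le_of_lt hq0)]
      rw [show (-(p:ℝ)/2 * ((2:ℕ):ℝ)) = -(p:ℝ) by push_cast; ring]
      rw [Real.rpow_neg (le_of_lt hq0), Real.rpow_natCast]
    have h3 : ‖lam‖ ^ 2 = (q^p)⁻¹ := by
      rw [Complex.sq_norm, ← hsdef]
      exact hsval
    have h4 : 0 ≤ ‖lam‖ := norm_nonneg _
    have h5 : 0 ≤ q ^ (-(p:ℝ)/2) := Real.rpow_nonneg (le_of_lt hq0) _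
    have h6 : (‖lam‖ - q ^ (-(p:ℝ)/2)) * (‖lam‖ + q ^ (-(p:ℝ)/2)) = 0 := by
      linear_combination h3 - h2
    rcases mul_eq_zero.mp h6 with h' | h'
    · linarith
    · linarith
  have hccoef : ∀ j : ℕ, kCoef q φ (2*(p:ℝ)*φ - Complex.arg lam) p j = c j := by
    intro j
    rw [uqu2_aux_kCoef_eq q φ (Complex.arg lam) hq0 p j, ← hμdef]
    simp only [hcdef]
    congr 1
    rw [← habslam]
    exact Complex.norm_mul_exp_arg_mul_I lam
  refine ⟨p, 2*(p:ℝ)*φ - Complex.arg lam, 1, b, ?_, Or.inl rfl, ?_, ?_, ?_, ?_, ?_, ?_⟩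
  · rw [Module.finrank_eq_card_basis b, Fintype.card_fin]
  · -- K action
    intro j
    rw [hb, map_smul, hKv, hccoef, smul_smul, smul_smul, mul_comm]
  · -- adjoint K action
    intro j
    rw [hb, map_smul, hK'v, uqu2_aux_kStarCoef, hccoef, smul_smul, smul_smul, mul_comm]
  · -- F action
    intro j h
    have hjp : (j:ℕ) < p := by omega
    rw [hb, map_smul, ← hvsucc, hb]
    simp only
    rw [smul_smul]
    norm_cast
    rw [hTsucc]
    congr 1
    field_simp
    rw [mul_div_cancel_right₀ _ (ne_of_gt (hfCpos _ hjp))]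
  · -- F on the last vector
    rw [hb, map_smul]
    show ((T ((Fin.last p : Fin (p+1)):ℕ) : ℝ) : ℂ) • F (v ((Fin.last p : Fin (p+1)):ℕ)) = 0
    rw [Fin.val_last, ← hvsucc, hvp1, smul_zero]
  · -- E action
    intro j hj
    obtain ⟨k, hk⟩ : ∃ k, (j:ℕ) = k + 1 := ⟨(j:ℕ) - 1, by omega⟩
    have hkp : k < p := by have := j.isLt; omega
    rw [hb, map_smul]
    simp only [hk, Nat.add_sub_cancel]
    rw [hEv k, hb]
    simp only [hk, Nat.add_sub_cancel]
    rw [smul_smul, smul_smul]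
    norm_cast
    rw [hTsucc, uqu2_aux_eCoef_succ, ← hfsq k hkp]
    have hf0 : fCoef q p k ≠ 0 := ne_of_gt (hfCpos k hkp)
    congr 1
    field_simp
  · -- E kills the lowest vector
    rw [hb]
    show E (((T ((0 : Fin (p+1)):ℕ) : ℝ) : ℂ) • v ((0 : Fin (p+1)):ℕ)) = 0
    rw [map_smul]
    simp only [Fin.val_zero]
    rw [hEv0, smul_zero]
end
end

section
/- Let 0 < q < 1 and ψ ∈ ℝ, let V be a complex normed vector space, and let X₁, X₀, X₋₁ be bounded (continuous) linear operators on V satisfying the relations X₁ X₀ = q⁻² e^{−2iψ} X₀ X₁, X₋₁ X₀ = q² e^{2iψ} X₀ X₋₁, X₁ X₋₁ = −q⁻² e^{−2iψ} X₀ X₀, and X₋₁ X₁ = −q² e^{2iψ} X₀ X₀. Then X₀ has no eigenvector with nonzero eigenvalue: if X₀ v = λ v for some v ≠ 0 and λ ∈ ℂ, then λ = 0. (Hence the ψ ≠ 0 family of quadratic algebras admits no bounded representation in which X₀ has a nonzero eigenvalue.) -/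
/-- For `0 < q < 1`, bounded operators `Xpos, Xzero, Xneg` on a complex normed space
satisfying the quadratic-algebra relations
`XposXzero = q⁻²e^{−2iψ} XzeroXpos`, `XnegXzero = q²e^{2iψ} XzeroXneg`,
`XposXneg = −q⁻²e^{−2iψ} XzeroXzero`, `XnegXpos = −q²e^{2iψ} XzeroXzero`
admit no eigenvector of `Xzero` with nonzero eigenvalue. -/
theorem no_bounded_representation_with_nonzero_eigenvalue
    (q ψ : ℝ) (hq0 : 0 < q) (hq1 : q < 1)
    {V : Type*} [NormedAddCommGroup V] [NormedSpace ℂ V]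
    (Xpos Xzero Xneg : V →L[ℂ] V)
    (h1 : Xpos * Xzero = (((q : ℂ) ^ 2)⁻¹ * Complex.exp (-2 * Complex.I * (ψ : ℂ))) • (Xzero * Xpos))
    (h2 : Xneg * Xzero = ((q : ℂ) ^ 2 * Complex.exp (2 * Complex.I * (ψ : ℂ))) • (Xzero * Xneg))
    (h3 : Xpos * Xneg = -(((q : ℂ) ^ 2)⁻¹ * Complex.exp (-2 * Complex.I * (ψ : ℂ))) • (Xzero * Xzero))
    (h4 : Xneg * Xpos = -((q : ℂ) ^ 2 * Complex.exp (2 * Complex.I * (ψ : ℂ))) • (Xzero * Xzero)) :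
    ∀ (v : V) (lam : ℂ), v ≠ 0 → Xzero v = lam • v → lam = 0 := by
  intro v lam hv hev
  by_contra hlam
  set c : ℂ := ((q : ℂ) ^ 2)⁻¹ * Complex.exp (-2 * Complex.I * (ψ : ℂ)) with hcdef
  have hqC : ((q : ℂ) ^ 2) ≠ 0 := by
    exact pow_ne_zero _ (by exact_mod_cast hq0.ne')
  have hexp : Complex.exp (2 * Complex.I * (ψ : ℂ)) ≠ 0 := Complex.exp_ne_zero _
  have hc0 : c ≠ 0 := mul_ne_zero (inv_ne_zero hqC) (Complex.exp_ne_zero _)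
  have hcval : ((q : ℂ) ^ 2 * Complex.exp (2 * Complex.I * (ψ : ℂ)))⁻¹ = c := by
    rw [mul_inv, ← Complex.exp_neg, hcdef]
    ring_nf
  have hcabs : ‖c‖ = (q ^ 2)⁻¹ := by
    have : ‖Complex.exp (-2 * Complex.I * (ψ : ℂ))‖ = 1 := by
      rw [Complex.norm_exp]
      simp [mul_comm, mul_assoc]
    rw [hcdef, norm_mul, this, mul_one, norm_inv]
    simp [norm_pow, abs_of_pos hq0]
  have key : ∀ n : ℕ, Xzero ((Xneg ^ n) v) = (c ^ n * lam) • ((Xneg ^ n) v) ∧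
      (Xneg ^ n) v ≠ 0 := by
    intro n
    induction n with
    | zero => simpa using ⟨hev, hv⟩
    | succ n ih =>
      obtain ⟨heig, hne⟩ := ih
      set w := (Xneg ^ n) v with hw
      have hstep : Xzero (Xneg w) = (c ^ (n + 1) * lam) • Xneg w := by
        have h2' := congrArg (fun f => f w) h2
        simp only [ContinuousLinearMap.mul_apply, ContinuousLinearMap.smul_apply] at h2'
        rw [heig, map_smul] at h2'
        have h2'' := congrArg
          (fun x => (((q : ℂ) ^ 2 * Complex.exp (2 * Complex.I * (ψ : ℂ)))⁻¹) • x) h2'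
        simp only [smul_smul] at h2''
        rw [inv_mul_cancel₀ (mul_ne_zero hqC hexp), one_smul] at h2''
        rw [← h2'', hcval]
        congr 1
        ring
      have hwne : Xneg w ≠ 0 := by
        intro h0
        have h3' := congrArg (fun f => f w) h3
        simp only [ContinuousLinearMap.mul_apply, ContinuousLinearMap.smul_apply] at h3'
        rw [h0, map_zero, heig, map_smul, heig, smul_smul, smul_smul] at h3'
        have hco : -c * (c ^ n * lam) * (c ^ n * lam) ≠ 0 :=
          mul_ne_zero (mul_ne_zero (neg_ne_zero.mpr hc0)
            (mul_ne_zero (pow_ne_zero _ hc0) hlam))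
            (mul_ne_zero (pow_ne_zero _ hc0) hlam)
        exact hne ((smul_eq_zero.mp h3'.symm).resolve_left hco)
      constructor
      · rw [pow_succ', ContinuousLinearMap.mul_apply]
        exact hstep
      · rw [pow_succ', ContinuousLinearMap.mul_apply]
        exact hwne
  have hbound : ∀ n : ℕ, ((q ^ 2)⁻¹) ^ n * ‖lam‖ ≤ ‖Xzero‖ := by
    intro n
    obtain ⟨heig, hne⟩ := key n
    have hle : ‖Xzero ((Xneg ^ n) v)‖ ≤ ‖Xzero‖ * ‖(Xneg ^ n) v‖ :=
      Xzero.le_opNorm _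
    rw [heig, norm_smul] at hle
    have hwpos : 0 < ‖(Xneg ^ n) v‖ := norm_pos_iff.mpr hne
    have := le_of_mul_le_mul_right hle hwpos
    calc ((q ^ 2)⁻¹) ^ n * ‖lam‖
        = ‖c ^ n * lam‖ := by
          rw [norm_mul, norm_pow]
          simp only [hcabs]
      _ ≤ ‖Xzero‖ := this
  have hq2 : (1 : ℝ) < (q ^ 2)⁻¹ := by
    rw [lt_inv_comm₀ one_pos (by positivity)]
    nlinarith
  obtain ⟨n, hn⟩ := pow_unbounded_of_one_lt (‖Xzero‖ / ‖lam‖) hq2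
  have hlpos : 0 < ‖lam‖ := by
    simpa [norm_pos_iff] using hlam
  have := hbound n
  rw [div_lt_iff₀ hlpos] at hn
  linarith
end

section
/- Let k be a field, H a bialgebra over k with comultiplication Δ : H → H ⊗ H, and A a (not necessarily commutative) unital k-algebra. Let act : H →ₗ[k] A →ₗ[k] A (written h ⊳ a) and Ξ : H ⊗[k] A →ₗ[k] A ⊗[k] H be linear maps satisfying the braided module-algebra law: for all h ∈ H and a, b ∈ A, h ⊳ (a·b) equals the result of applying multiplication ∘ (act ⊗ act) ∘ (id_H ⊗ Ξ ⊗ id_A) ∘ (Δ ⊗ id_A ⊗ id_A) to h ⊗ a ⊗ b (i.e., writing Δh = Σ h₍₁₎ ⊗ h₍₂₎ and Ξ(h₍₂₎ ⊗ a) = Σ a' ⊗ h₍₂₎', one has h ⊳ (ab) = Σ (h₍₁₎ ⊳ a')·(h₍₂₎' ⊳ b)). Suppose x, h₁, h₂ ∈ H satisfy Δ x = x ⊗ h₁ + h₂ ⊗ x (x is quasi-primitive). Set A_x := {a ∈ A : x ⊳ a = 0}. Assume: (1) for every a ∈ A_x there exists ã ∈ A with Ξ(x ⊗ a) = ã ⊗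 x; and (2) for every a ∈ A_x, Ξ(h₁ ⊗ a) lies in the image of A_x ⊗ H inside A ⊗ H. Then A_x is closed under multiplication: a, b ∈ A_x implies a·b ∈ A_x. -/
open scoped TensorProduct

noncomputable section

variable {k : Type*} [Field k]
variable {H : Type*} [Ring H] [Bialgebra k H]
variable {A : Type*} [Ring A] [Algebra k A]

/-- The braided module-algebra composite
`μ_A ∘ (act ⊗ act) ∘ (id_H ⊗ Ξ ⊗ id_A) ∘ (Δ_H ⊗ id_A ⊗ id_A) : H ⊗ (A ⊗ A) → A`. -/
def braidedProductAction (act : H →ₗ[k] A →ₗ[k] A) (Ξ : H ⊗[k] A →ₗ[k] A ⊗[k] H) :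
    H ⊗[k] (A ⊗[k] A) →ₗ[k] A :=
  LinearMap.mul' k A ∘ₗ
    TensorProduct.map (TensorProduct.lift act) (TensorProduct.lift act) ∘ₗ
    (TensorProduct.assoc k H A (H ⊗[k] A)).symm.toLinearMap ∘ₗ
    LinearMap.lTensor H ((TensorProduct.assoc k A H A).toLinearMap) ∘ₗ
    LinearMap.lTensor H (LinearMap.rTensor A Ξ) ∘ₗ
    LinearMap.lTensor H ((TensorProduct.assoc k H A A).symm.toLinearMap) ∘ₗ
    (TensorProduct.assoc k H H (A ⊗[k] A)).toLinearMap ∘ₗ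
    LinearMap.rTensor (A ⊗[k] A) (Coalgebra.comul (R := k) (A := H))

/-- If `x` is quasi-primitive, `Δx = x ⊗ h₁ + h₂ ⊗ x`, the action satisfies the braided
module-algebra law, and the braiding `Ξ` maps `x ⊗ A_x` into `A ⊗ x` and `h₁ ⊗ A_x` into
`A_x ⊗ H`, then the kernel `A_x = {a : x ⊳ a = 0}` of the action of `x` is closed under
multiplication. -/
theorem kernel_of_quasiPrimitive_action_mul_closed
    (act : H →ₗ[k] A →ₗ[k] A) (Ξ : H ⊗[k] A →ₗ[k] A ⊗[k] H)
    (hlaw : ∀ (h : H) (a b : A),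
      act h (a * b) = braidedProductAction act Ξ (h ⊗ₜ[k] (a ⊗ₜ[k] b)))
    (x h₁ h₂ : H)
    (hx : Coalgebra.comul (R := k) x = x ⊗ₜ[k] h₁ + h₂ ⊗ₜ[k] x)
    (hbr₁ : ∀ a : A, act x a = 0 → ∃ a' : A, Ξ (x ⊗ₜ[k] a) = a' ⊗ₜ[k] x)
    (hbr₂ : ∀ a : A, act x a = 0 →
      Ξ (h₁ ⊗ₜ[k] a) ∈ LinearMap.range
        (TensorProduct.map (LinearMap.ker (act x)).subtype (LinearMap.id : H →ₗ[k] H))) :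
    ∀ a b : A, act x a = 0 → act x b = 0 → act x (a * b) = 0 := by
  intro a b ha hb
  obtain ⟨t, ht⟩ := hbr₂ a ha
  obtain ⟨a', ha'⟩ := hbr₁ a ha
  rw [hlaw]
  unfold braidedProductAction
  simp only [LinearMap.comp_apply, LinearEquiv.coe_coe, LinearMap.rTensor_tmul, hx,
    TensorProduct.add_tmul, map_add, TensorProduct.assoc_tmul, LinearMap.lTensor_tmul,
    TensorProduct.assoc_symm_tmul, ha', TensorProduct.map_tmul,
    TensorProduct.lift.tmul, LinearMap.mul'_apply, hb, mul_zero, add_zero]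
  rw [← ht]
  set F : A ⊗[k] H →ₗ[k] A :=
    LinearMap.mul' k A ∘ₗ
      TensorProduct.map (TensorProduct.lift act) (TensorProduct.lift act) ∘ₗ
      (TensorProduct.assoc k H A (H ⊗[k] A)).symm.toLinearMap ∘ₗ
      TensorProduct.mk k H (A ⊗[k] (H ⊗[k] A)) x ∘ₗ
      (TensorProduct.assoc k A H A).toLinearMap ∘ₗ
      (TensorProduct.mk k (A ⊗[k] H) A).flip b with hF
  clear ht
  show F ((TensorProduct.map (LinearMap.ker (act x)).subtype LinearMap.id) t) = 0
  induction t using TensorProduct.induction_on with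
  | zero => rw [map_zero, map_zero]
  | tmul c g =>
      rw [TensorProduct.map_tmul]
      simp only [hF, LinearMap.comp_apply, LinearEquiv.coe_coe, TensorProduct.mk_apply,
        LinearMap.flip_apply, TensorProduct.assoc_tmul, TensorProduct.assoc_symm_tmul,
        TensorProduct.map_tmul, TensorProduct.lift.tmul, LinearMap.mul'_apply,
        Submodule.coe_subtype, LinearMap.id_coe, id_eq]
      rw [show act x (c : A) = 0 from c.2, zero_mul]
  | add s t hs ht => rw [map_add, map_add, hs, ht, add_zero]
end
end

section
/- Let ϕ ∈ ℝ and let F : ℤ × ℤ → ℂ be a function with F(m,n) ≠ 0 for all m, n, satisfying the two functional equations: (1) F(g + h, a) = F(h, g + a) · F(g, a) · exp(2iϕ·h·g) for all g, h, a ∈ ℤ; and (2) F(h₁ + h₂, a + b) = F(h₁, a) · F(h₂, b) · exp(−2iϕ·h₂·a) · exp(−2iϕ·h₁·b) for all h₁, h₂, a, b ∈ ℤ. Then F(m, n) = F(1,0)^m · exp(−2iϕ·m·n) for all m, n ∈ ℤ. In particular, if additionally F(m, 0) = 1 for all m ∈ ℤ, then F(m, n) = exp(−2iϕ·m·n). 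-/
/-- The solution of the functional equations for the phase factor of the star structure
on `H ⊗ A` for a braided Hopf algebra obtained from twisting: any nowhere-vanishing
`F : ℤ × ℤ → ℂ` satisfying
`F(g+h, a) = F(h, g+a) F(g, a) e^{2iϕhg}` and
`F(h₁+h₂, a+b) = F(h₁,a) F(h₂,b) e^{−2iϕh₂a} e^{−2iϕh₁b}`
is of the form `F(m,n) = F(1,0)^m e^{−2iϕmn}`; in particular if `F(m,0) = 1` for all `m`
then `F(m,n) = e^{−2iϕmn}`. -/
theorem star_phase_factor_eq_exp
    (ϕ : ℝ) (F : ℤ × ℤ → ℂ) (hF : ∀ m n : ℤ, F (m, n) ≠ 0)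
    (h1 : ∀ g h a : ℤ, F (g + h, a) =
      F (h, g + a) * F (g, a) *
        Complex.exp (2 * Complex.I * (ϕ : ℂ) * (h : ℂ) * (g : ℂ)))
    (h2 : ∀ h₁ h₂ a b : ℤ, F (h₁ + h₂, a + b) =
      F (h₁, a) * F (h₂, b) *
        Complex.exp (-2 * Complex.I * (ϕ : ℂ) * (h₂ : ℂ) * (a : ℂ)) *
        Complex.exp (-2 * Complex.I * (ϕ : ℂ) * (h₁ : ℂ) * (b : ℂ))) :
    (∀ m n : ℤ, F (m, n) =
      F (1, 0) ^ m * Complex.exp (-2 * Complex.I * (ϕ : ℂ) * (m : ℂ) * (n : ℂ))) ∧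
    ((∀ m : ℤ, F (m, 0) = 1) → ∀ m n : ℤ,
      F (m, n) = Complex.exp (-2 * Complex.I * (ϕ : ℂ) * (m : ℂ) * (n : ℂ))) := by
  have hz : ∀ a : ℤ, F (0, a) = 1 := by
    intro a
    have h := h1 a 0 0
    simp only [add_zero, Int.cast_zero, mul_zero, zero_mul, Complex.exp_zero, mul_one] at h
    have hne := hF a 0
    field_simp at h
    exact h.symm
  have hadd : ∀ m n : ℤ, F (m, n) =
      F (m, 0) * Complex.exp (-2 * Complex.I * (ϕ : ℂ) * (m : ℂ) * (n : ℂ)) := by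
    intro m n
    have h := h2 m 0 0 n
    simp only [add_zero, zero_add, Int.cast_zero, mul_zero, zero_mul, Complex.exp_zero,
      mul_one, hz] at h
    exact h
  have hom : ∀ p q : ℤ, F (p + q, 0) = F (p, 0) * F (q, 0) := by
    intro p q
    have h := h2 p q 0 0
    simpa using h
  have hpow : ∀ m : ℤ, F (m, 0) = F (1, 0) ^ m := by
    intro m
    induction m using Int.induction_on with
    | zero => simpa using hz 0
    | succ k ih =>
        have h := hom k 1
        rw [h, ih, ← zpow_add_one₀ (hF 1 0)]
    | pred k ih =>
        have h := hom (-(k : ℤ) - 1) 1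
        rw [show (-(k : ℤ) - 1 + 1) = -(k : ℤ) by ring] at h
        have h3 : F (-(k : ℤ) - 1, 0) = F (-(k : ℤ), 0) * (F (1, 0))⁻¹ := by
          field_simp [hF 1 0]
          exact h.symm
        rw [h3, ih, ← zpow_neg_one, ← zpow_add₀ (hF 1 0),
          show (-(k : ℤ) + -1) = -(k : ℤ) - 1 by ring]
  constructor
  · intro m n
    rw [hadd m n, hpow m]
  · intro hone m n
    rw [hadd m n, hone m, one_mul]
end
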